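/- arXiv:math/9804104 — 3 statements merged into one kernel-verified Lean document; each statement's English description precedes it below -/
import Mathlib

section
/- Let V be a multiplicative unitary on a finite-dimensional Hilbert space H and let ξ ∈ H be a unit vector. If ψ = ω_{ξ,ξ} denotes the vector state, then the set H^ξ = {η ∈ H : V(ξ⊗η) = ξ⊗η} equals {η ∈ H : L(ψ)η = η}, where L(ψ) = (ψ⊗id)(V). -/
open scoped InnerProductSpace ComplexOrder

noncomputable section

namespace MU

variable {ι : Type*} [Fintype ι] [DecidableEq ι]

/-- The elementary tensor `f ⊗ g` of two vectors, in the model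
`H ⊗ H = EuclideanSpace ℂ (ι × ι)`. -/
def tens (f g : EuclideanSpace ℂ ι) : EuclideanSpace ℂ (ι × ι) :=
  WithLp.toLp 2 (fun p => f p.1 * g p.2)

/-- `g ↦ f ⊗ g` as a linear map. -/
def tensL (f : EuclideanSpace ℂ ι) :
    EuclideanSpace ℂ ι →ₗ[ℂ] EuclideanSpace ℂ (ι × ι) where
  toFun g := tens f g
  map_add' x y := by
    ext p; simp only [tens, PiLp.add_apply]; ring
  map_smul' c x := by
    ext p; simp only [tens, PiLp.smul_apply, smul_eq_mul, RingHom.id_apply]; ring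

/-- `f ↦ f ⊗ g` as a linear map. -/
def tensR (g : EuclideanSpace ℂ ι) :
    EuclideanSpace ℂ ι →ₗ[ℂ] EuclideanSpace ℂ (ι × ι) where
  toFun f := tens f g
  map_add' x y := by
    ext p; simp only [tens, PiLp.add_apply]; ring
  map_smul' c x := by
    ext p; simp only [tens, PiLp.smul_apply, smul_eq_mul, RingHom.id_apply]; ring

/-- Action of a matrix on a Euclidean space vector. -/
def appM {κ : Type*} [Fintype κ] (M : Matrix κ κ ℂ) (v : EuclideanSpace ℂ κ) :
    EuclideanSpace ℂ κ :=
  WithLp.toLp 2 (fun i => ∑ j, M i j * v j)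

/-- Action of a matrix as a linear map on the Euclidean space. -/
def mact {κ : Type*} [Fintype κ] (M : Matrix κ κ ℂ) :
    EuclideanSpace ℂ κ →ₗ[ℂ] EuclideanSpace ℂ κ where
  toFun := appM M
  map_add' x y := by
    ext i; simp only [appM, PiLp.add_apply, mul_add, Finset.sum_add_distrib]
  map_smul' c x := by
    ext i; simp only [appM, PiLp.smul_apply, smul_eq_mul, RingHom.id_apply, Finset.mul_sum]
    refine Finset.sum_congr rfl fun j _ => ?_
    ring

/-- The leg `V₁₂` on `H ⊗ H ⊗ H`. -/
def leg12 (V : Matrix (ι × ι) (ι × ι) ℂ) : Matrix (ι × ι × ι) (ι × ι × ι) ℂ :=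
  fun p q => V (p.1, p.2.1) (q.1, q.2.1) * (if p.2.2 = q.2.2 then 1 else 0)

/-- The leg `V₁₃` on `H ⊗ H ⊗ H`. -/
def leg13 (V : Matrix (ι × ι) (ι × ι) ℂ) : Matrix (ι × ι × ι) (ι × ι × ι) ℂ :=
  fun p q => V (p.1, p.2.2) (q.1, q.2.2) * (if p.2.1 = q.2.1 then 1 else 0)

/-- The leg `V₂₃` on `H ⊗ H ⊗ H`. -/
def leg23 (V : Matrix (ι × ι) (ι × ι) ℂ) : Matrix (ι × ι × ι) (ι × ι × ι) ℂ :=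
  fun p q => V (p.2.1, p.2.2) (q.2.1, q.2.2) * (if p.1 = q.1 then 1 else 0)

/-- The pentagon equation `V₁₂ V₁₃ V₂₃ = V₂₃ V₁₂`. -/
def Pentagon (V : Matrix (ι × ι) (ι × ι) ℂ) : Prop :=
  leg12 V * leg13 V * leg23 V = leg23 V * leg12 V

/-- `V` is a multiplicative unitary: a unitary satisfying the pentagon equation. -/
def IsMU (V : Matrix (ι × ι) (ι × ι) ℂ) : Prop :=
  V * V.conjTranspose = 1 ∧ V.conjTranspose * V = 1 ∧ Pentagon V

/-- `ξ` is a fixed vector for `V`. -/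
def Fixed (V : Matrix (ι × ι) (ι × ι) ℂ) (ξ : EuclideanSpace ℂ ι) : Prop :=
  ∀ η, mact V (tens ξ η) = tens ξ η

/-- `ξ` is a cofixed vector for `V`. -/
def Cofixed (V : Matrix (ι × ι) (ι × ι) ℂ) (ξ : EuclideanSpace ℂ ι) : Prop :=
  ∀ η, mact V (tens η ξ) = tens η ξ

/-- `V` has multiplicity 1, with fixed unit vector `e` and cofixed unit vector `eHat`. -/
def Mult1 (V : Matrix (ι × ι) (ι × ι) ℂ) (e eHat : EuclideanSpace ℂ ι) : Prop :=
  ‖e‖ = 1 ∧ ‖eHat‖ = 1 ∧ Fixed V e ∧ Cofixed V eHat ∧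
    (∀ ξ, Fixed V ξ → ∃ c : ℂ, ξ = c • e) ∧
    (∀ ξ, Cofixed V ξ → ∃ c : ℂ, ξ = c • eHat)

/-- A pre-subgroup of `V` (with fixed vector `e`): a unit vector `f` with
`⟨f,e⟩ > 0` and `V(f⊗f) = f⊗f`. -/
def IsPreSubgroup (V : Matrix (ι × ι) (ι × ι) ℂ) (e f : EuclideanSpace ℂ ι) : Prop :=
  ‖f‖ = 1 ∧ 0 < ⟪f, e⟫_ℂ ∧ mact V (tens f f) = tens f f

/-- The subspace `H^f = {η : V(f⊗η) = f⊗η}`. -/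
def subUp (V : Matrix (ι × ι) (ι × ι) ℂ) (f : EuclideanSpace ℂ ι) :
    Submodule ℂ (EuclideanSpace ℂ ι) :=
  LinearMap.ker ((mact V).comp (tensL f) - tensL f)

/-- The subspace `H_f = {η : V(η⊗f) = η⊗f}`. -/
def subDown (V : Matrix (ι × ι) (ι × ι) ℂ) (f : EuclideanSpace ℂ ι) :
    Submodule ℂ (EuclideanSpace ℂ ι) :=
  LinearMap.ker ((mact V).comp (tensR f) - tensR f)

/-- The slice `L(ω_{ξ,η}) = (ω_{ξ,η} ⊗ id)(V)`. -/
def Lslice (V : Matrix (ι × ι) (ι × ι) ℂ) (ξ η : EuclideanSpace ℂ ι) : Matrix ι ι ℂ :=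
  fun a b => ∑ x, ∑ y, (starRingEnd ℂ) (ξ x) * η y * V (x, a) (y, b)

/-- The slice `ρ(ω_{ξ,η}) = (id ⊗ ω_{ξ,η})(V)`. -/
def Rslice (V : Matrix (ι × ι) (ι × ι) ℂ) (ξ η : EuclideanSpace ℂ ι) : Matrix ι ι ℂ :=
  fun a b => ∑ x, ∑ y, (starRingEnd ℂ) (ξ x) * η y * V (a, x) (b, y)

/-- The slice `L(ω) = (ω ⊗ id)(V)` of a general linear functional `ω` on `L(H)`. -/
def LslF (V : Matrix (ι × ι) (ι × ι) ℂ) (ω : Matrix ι ι ℂ →ₗ[ℂ] ℂ) : Matrix ι ι ℂ :=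
  fun a b => ω (fun x y => V (x, a) (y, b))

/-- A state on `L(H)`: a unital positive linear functional. -/
def IsState (ω : Matrix ι ι ℂ →ₗ[ℂ] ℂ) : Prop :=
  ω 1 = 1 ∧ ∀ M : Matrix ι ι ℂ, M.PosSemidef → ∃ r : ℝ, 0 ≤ r ∧ ω M = r


/-- Auxiliary: a sum of `star z * z` vanishing forces each term to vanish. -/
lemma aux_sum_star_mul_self_eq_zero {κ : Type*} [Fintype κ] (f : κ → ℂ)
    (h : ∑ p, star (f p) * f p = 0) : ∀ p, f p = 0 := by
  have h' : ∀ p ∈ Finset.univ, star (f p) * f p = 0 := by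
    rw [Finset.sum_eq_zero_iff_of_nonneg (fun p _ => star_mul_self_nonneg (f p))] at h
    exact h
  intro p
  have hp := h' p (Finset.mem_univ p)
  rw [← starRingEnd_apply, ← Complex.normSq_eq_conj_mul_self] at hp
  exact Complex.normSq_eq_zero.mp (by exact_mod_cast hp)

/-- Auxiliary: unit vectors have unit "self-pairing". -/
lemma aux_sum_star_mul_self_eq_one {ι : Type*} [Fintype ι]
    (ξ : EuclideanSpace ℂ ι) (hξ : ‖ξ‖ = 1) : ∑ x, star (ξ x) * ξ x = 1 := by
  have := inner_self_eq_norm_sq_to_K (𝕜 := ℂ) ξ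
  rw [hξ, PiLp.inner_apply] at this
  simp only [RCLike.inner_apply, starRingEnd_apply] at this
  rw [Finset.sum_congr rfl fun x _ => mul_comm (star (ξ x)) (ξ x), this]; norm_num

/-- The key identity: `L(ω_ξξ) η` is the slice of `V(ξ⊗η)` against `ξ`. -/
lemma aux_key {ι : Type*} [Fintype ι] (V : Matrix (ι × ι) (ι × ι) ℂ)
    (ξ η : EuclideanSpace ℂ ι) (a : ι) :
    appM (Lslice V ξ ξ) η a = ∑ x, star (ξ x) * appM V (tens ξ η) (x, a) := by
  simp only [appM, Lslice, tens, WithLp.ofLp_toLp, PiLp.toLp_apply, Fintype.sum_prod_type, Finset.sum_mul, Finset.mul_sum,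
    starRingEnd_apply]
  rw [Finset.sum_comm]
  refine Finset.sum_congr rfl fun x _ => ?_
  rw [Finset.sum_comm]
  exact Finset.sum_congr rfl fun y _ => Finset.sum_congr rfl fun b _ => by ring

/-- Unitarity: `appM V` preserves the standard pairing. -/
lemma aux_isometry {κ : Type*} [Fintype κ] [DecidableEq κ] (V : Matrix κ κ ℂ)
    (hV : V.conjTranspose * V = 1) (u : EuclideanSpace ℂ κ) :
    ∑ p, star (appM V u p) * appM V u p = ∑ p, star (u p) * u p := by
  have hE : ∀ q r, ∑ p, star (V p q) * V p r = if q = r then 1 else 0 := by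
    intro q r
    have := congrFun (congrFun hV q) r
    rw [Matrix.mul_apply] at this
    simp only [Matrix.conjTranspose_apply, starRingEnd_apply] at this
    rw [this, Matrix.one_apply]
  have L1 : ∑ p, star (appM V u p) * appM V u p
      = ∑ p, ∑ z : κ × κ, star (u z.1) * u z.2 * (star (V p z.1) * V p z.2) := by
    refine Finset.sum_congr rfl fun p _ => ?_
    rw [Fintype.sum_prod_type]
    simp only [appM, WithLp.ofLp_toLp, PiLp.toLp_apply, star_sum, Finset.sum_mul, Finset.mul_sum, star_mul']
    rw [Finset.sum_comm]
    exact Finset.sum_congr rfl fun q _ => Finset.sum_congr rfl fun r _ => by ring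
  rw [L1, Finset.sum_comm]
  calc ∑ z : κ × κ, ∑ p, star (u z.1) * u z.2 * (star (V p z.1) * V p z.2)
      = ∑ z : κ × κ, star (u z.1) * u z.2 * (if z.1 = z.2 then 1 else 0) := by
        refine Finset.sum_congr rfl fun z _ => ?_
        rw [← Finset.mul_sum, hE]
    _ = ∑ q, star (u q) * u q := by
        rw [Fintype.sum_prod_type]
        simp

/-- for a unit vector `ξ`, the set `H^ξ` coincides with the
fixed-point set of `L(ω_ξξ)`. -/
theorem subUp_eq_fixedPoints_Lslice {ι : Type*} [Fintype ι] [DecidableEq ι] [Nonempty ι]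
    (V : Matrix (ι × ι) (ι × ι) ℂ) (hV : IsMU V)
    (ξ : EuclideanSpace ℂ ι) (hξ : ‖ξ‖ = 1) :
    {η : EuclideanSpace ℂ ι | mact V (tens ξ η) = tens ξ η} =
      {η : EuclideanSpace ℂ ι | appM (Lslice V ξ ξ) η = η} := by
  have hone := aux_sum_star_mul_self_eq_one ξ hξ
  ext η
  simp only [Set.mem_setOf_eq]
  constructor
  · intro h
    have h' : appM V (tens ξ η) = tens ξ η := h
    ext a
    rw [aux_key V ξ η a, h']
    calc ∑ x, star (ξ x) * tens ξ η (x, a)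
        = (∑ x, star (ξ x) * ξ x) * η a := by
          rw [Finset.sum_mul]
          exact Finset.sum_congr rfl fun x _ => by simp only [tens, WithLp.ofLp_toLp, PiLp.toLp_apply]; ring
      _ = η a := by rw [hone, one_mul]
  · intro h
    set u : EuclideanSpace ℂ (ι × ι) := tens ξ η with hu
    set w : EuclideanSpace ℂ (ι × ι) := appM V u with hw
    set N : ℂ := ∑ a, star (η a) * η a with hN
    -- ⟨u, w⟩ = N
    have huw : ∑ p, star (u p) * w p = N := by
      calc ∑ p, star (u p) * w p
          = ∑ a, star (η a) * ∑ x, star (ξ x) * w (x, a) := by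
            rw [Fintype.sum_prod_type]
            rw [Finset.sum_comm]
            refine Finset.sum_congr rfl fun a _ => ?_
            rw [Finset.mul_sum]
            refine Finset.sum_congr rfl fun x _ => ?_
            simp only [hu, tens, WithLp.ofLp_toLp, PiLp.toLp_apply, star_mul']
            ring
        _ = ∑ a, star (η a) * appM (Lslice V ξ ξ) η a := by
            exact Finset.sum_congr rfl fun a _ => by rw [aux_key V ξ η a]
        _ = N := by rw [h]
    -- ⟨u, u⟩ = N
    have huu : ∑ p, star (u p) * u p = N := by
      calc ∑ p, star (u p) * u p
          = (∑ x, star (ξ x) * ξ x) * ∑ a, star (η a) * η a := by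
            rw [Fintype.sum_prod_type, Finset.sum_mul]
            refine Finset.sum_congr rfl fun x _ => ?_
            rw [Finset.mul_sum]
            refine Finset.sum_congr rfl fun a _ => ?_
            simp only [hu, tens, WithLp.ofLp_toLp, PiLp.toLp_apply, star_mul']
            ring
        _ = N := by rw [hone, one_mul]
    -- ⟨w, w⟩ = N
    have hww : ∑ p, star (w p) * w p = N := by
      rw [hw, aux_isometry V hV.2.1 u, huu]
    -- ⟨w, u⟩ = star N = N
    have hwu : ∑ p, star (w p) * u p = N := by
      have : ∑ p, star (w p) * u p = star (∑ p, star (u p) * w p) := by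
        rw [star_sum]
        exact Finset.sum_congr rfl fun p _ => by rw [star_mul', star_star, mul_comm]
      rw [this, huw, hN, star_sum]
      exact Finset.sum_congr rfl fun a _ => by rw [star_mul', star_star, mul_comm]
    -- conclude w = u
    have hzero : ∑ p, star (w p - u p) * (w p - u p) = 0 := by
      have expand : ∀ p, star (w p - u p) * (w p - u p) =
          star (w p) * w p - star (w p) * u p - star (u p) * w p + star (u p) * u p := by
        intro p; rw [star_sub]; ring
      rw [Finset.sum_congr rfl fun p _ => expand p]
      rw [Finset.sum_add_distrib, Finset.sum_sub_distrib, Finset.sum_sub_distrib,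
        hww, hwu, huw, huu]
      ring
    have := aux_sum_star_mul_self_eq_zero (fun p => w p - u p) hzero
    have hfin : appM V (tens ξ η) = tens ξ η := by
      ext p
      have := this p
      rw [sub_eq_zero] at this
      exact this
    exact hfin

end MU
end
end

section
/- Let H be a finite-dimensional Hilbert space and A a unital *-subalgebra of L(H). The following are equivalent: (i) there exists a positive integer k such that H^k is a free A-module; (ii) dim(A)·dim(A') = (dim H)², where A' is the commutant of A. In this case, H itself is a free A-module if and only if dim(A) divides dim(H). -/
set_option linter.unusedSectionVars false
set_option maxHeartbeats 1000000
set_option synthInstance.maxHeartbeats 1000000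


open scoped InnerProductSpace ComplexOrder

noncomputable section

namespace MU

variable {ι : Type*} [Fintype ι] [DecidableEq ι]

/-- `H^k` is a free `A`-module: there is an `A`-basis, i.e. a family of vectors
`v : Fin m → (Fin k → H)` such that `(aᵢ) ↦ ∑ aᵢ • vᵢ` is a bijection from
`A^m` onto `H^k`. -/
def HFreePow {ι : Type*} [Fintype ι] [DecidableEq ι]
    (A : StarSubalgebra ℂ (Matrix ι ι ℂ)) (k : ℕ) : Prop :=
  ∃ (m : ℕ) (v : Fin m → Fin k → EuclideanSpace ℂ ι),
    Function.Bijective (fun a : Fin m → A =>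
      fun j : Fin k => ∑ i, appM ((a i : Matrix ι ι ℂ)) (v i j))

/-- The commutant of a star-subalgebra of `L(H)`, as a subspace of `L(H)`. -/
def commutant {ι : Type*} [Fintype ι] [DecidableEq ι]
    (A : StarSubalgebra ℂ (Matrix ι ι ℂ)) : Submodule ℂ (Matrix ι ι ℂ) where
  carrier := {M | ∀ a ∈ A, M * a = a * M}
  add_mem' := by intro x y hx hy a ha; rw [add_mul, mul_add, hx a ha, hy a ha]
  zero_mem' := by intro a ha; rw [zero_mul, mul_zero]
  smul_mem' := by intro c x hx a ha; rw [smul_mul_assoc, mul_smul_comm, hx a ha]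


universe u

section General

variable {R : Type u} [Ring R] [Algebra ℂ R]

instance (priority := 100) smulCommClass_tower {M : Type u} [AddCommGroup M] [Module R M]
    [Module ℂ M] [IsScalarTower ℂ R M] : SMulCommClass R ℂ M :=
  ⟨fun r c m => by
    rw [← algebraMap_smul R c m, ← algebraMap_smul R c (r • m), smul_smul, smul_smul,
      Algebra.commutes]⟩

variable (R) in
/-- The ℂ-dimension of the space of `R`-linear maps. -/
noncomputable def nu (M N : Type u) [AddCommGroup M] [Module R M] [AddCommGroup N] [Module R N]
    [Module ℂ N] [IsScalarTower ℂ R N] : ℕ :=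
  Module.finrank ℂ (M →ₗ[R] N)

theorem homFD (M N : Type u) [AddCommGroup M] [Module R M] [Module ℂ M] [IsScalarTower ℂ R M]
    [AddCommGroup N] [Module R N] [Module ℂ N] [IsScalarTower ℂ R N]
    [FiniteDimensional ℂ M] [FiniteDimensional ℂ N] :
    FiniteDimensional ℂ (M →ₗ[R] N) :=
  FiniteDimensional.of_injective (LinearMap.restrictScalarsₗ ℂ R M N ℂ)
    (LinearMap.restrictScalars_injective ℂ)

section NuLemmas

variable (M M' N N' : Type u)
  [AddCommGroup M] [Module R M] [Module ℂ M] [IsScalarTower ℂ R M]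
  [AddCommGroup M'] [Module R M'] [Module ℂ M'] [IsScalarTower ℂ R M']
  [AddCommGroup N] [Module R N] [Module ℂ N] [IsScalarTower ℂ R N]
  [AddCommGroup N'] [Module R N'] [Module ℂ N'] [IsScalarTower ℂ R N']

/-- Post-composition with an `R`-linear equivalence, as a ℂ-linear equivalence of hom spaces. -/
def homCongrRight (e : N ≃ₗ[R] N') : (M →ₗ[R] N) ≃ₗ[ℂ] (M →ₗ[R] N') where
  toFun f := e.toLinearMap ∘ₗ f
  invFun f := e.symm.toLinearMap ∘ₗ f
  map_add' f g := by ext x; simp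
  map_smul' c f := by
    ext x
    simp only [LinearMap.comp_apply, LinearMap.smul_apply, LinearEquiv.coe_coe,
      RingHom.id_apply]
    exact (e.toLinearMap).map_smul_of_tower c (f x)
  left_inv f := by ext x; simp
  right_inv f := by ext x; simp

variable {M M' N N'}

theorem nu_congr_left (e : M ≃ₗ[R] M') : nu R M N = nu R M' N :=
  (LinearEquiv.congrLeft N ℂ e).finrank_eq

theorem nu_congr_right (e : N ≃ₗ[R] N') : nu R M N = nu R M N' :=
  (homCongrRight M N N' e).finrank_eq

variable (M M' N N')

/-- Hom into a product splits. -/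
def homProdRight : (M →ₗ[R] N × N') ≃ₗ[ℂ] (M →ₗ[R] N) × (M →ₗ[R] N') where
  toFun f := ((LinearMap.fst R N N') ∘ₗ f, (LinearMap.snd R N N') ∘ₗ f)
  invFun p := p.1.prod p.2
  map_add' f g := by ext x <;> simp
  map_smul' c f := by ext x <;> simp
  left_inv f := by ext x <;> simp
  right_inv p := by ext x <;> simp

/-- Hom out of a product splits. -/
def homProdLeft : (M × M' →ₗ[R] N) ≃ₗ[ℂ] (M →ₗ[R] N) × (M' →ₗ[R] N) where
  toFun f := (f ∘ₗ LinearMap.inl R M M', f ∘ₗ LinearMap.inr R M M')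
  invFun p := p.1.coprod p.2
  map_add' f g := by ext x <;> simp
  map_smul' c f := by ext x <;> simp
  left_inv f := by
    ext x
    · simp
    · simp
  right_inv p := by ext x <;> simp

variable [FiniteDimensional ℂ M] [FiniteDimensional ℂ M'] [FiniteDimensional ℂ N]
  [FiniteDimensional ℂ N']

theorem nu_prod_right : nu R M (N × N') = nu R M N + nu R M N' := by
  haveI := homFD (R := R) M N
  haveI := homFD (R := R) M N'
  rw [nu, (homProdRight M N N').finrank_eq, Module.finrank_prod]
  rfl

theorem nu_prod_left : nu R (M × M') N = nu R M N + nu R M' N := by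
  haveI := homFD (R := R) M N
  haveI := homFD (R := R) M' N
  rw [nu, (homProdLeft M M' N).finrank_eq, Module.finrank_prod]
  rfl

theorem nu_pow_right (k : ℕ) : nu R M (Fin k → N) = k * nu R M N := by
  haveI := homFD (R := R) M N
  have e : (M →ₗ[R] (Fin k → N)) ≃ₗ[ℂ] (Fin k → (M →ₗ[R] N)) :=
    { toFun := fun f i => (LinearMap.proj i) ∘ₗ f
      invFun := fun g => LinearMap.pi g
      map_add' := fun f g => by ext i x; simp
      map_smul' := fun c f => by ext i x; simp
      left_inv := fun f => by ext x i; simp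
      right_inv := fun g => by ext i x; simp }
  rw [nu, e.finrank_eq, Module.finrank_pi_fintype, Finset.sum_const, Finset.card_univ,
    Fintype.card_fin, smul_eq_mul]
  rfl

theorem nu_pow_left (k : ℕ) : nu R (Fin k → M) N = k * nu R M N := by
  haveI := homFD (R := R) M N
  rw [nu, (LinearMap.lsum R (fun _ : Fin k => M) ℂ).symm.finrank_eq, Module.finrank_pi_fintype,
    Finset.sum_const, Finset.card_univ, Fintype.card_fin, smul_eq_mul]
  rfl

end NuLemmas

section Structure

theorem subFD {M : Type u} [AddCommGroup M] [Module R M] [Module ℂ M] [IsScalarTower ℂ R M]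
    [FiniteDimensional ℂ M] (S : Submodule R M) : FiniteDimensional ℂ ↥S :=
  FiniteDimensional.of_injective (S.subtype.restrictScalars ℂ) Subtype.val_injective

theorem finrank_of_isCompl {M : Type u} [AddCommGroup M] [Module R M] [Module ℂ M]
    [IsScalarTower ℂ R M] [FiniteDimensional ℂ M] (S C : Submodule R M) (h : IsCompl S C) :
    Module.finrank ℂ M = Module.finrank ℂ ↥S + Module.finrank ℂ ↥C := by
  haveI := subFD (R := R) S
  haveI := subFD (R := R) C
  rw [← Module.finrank_prod (R := ℂ),
    ((Submodule.prodEquivOfIsCompl S C h).restrictScalars ℂ).finrank_eq]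

theorem exists_simple_comp_injective {M N : Type u} [AddCommGroup M] [Module R M]
    [AddCommGroup N] [Module R N] [IsSemisimpleModule R M] (f : M →ₗ[R] N) (hf : f ≠ 0) :
    ∃ S : Submodule R M, IsSimpleModule R ↥S ∧ Function.Injective ⇑(f ∘ₗ S.subtype) := by
  have hne : ¬ ∀ S ∈ {m : Submodule R M | IsSimpleModule R ↥m}, S ≤ LinearMap.ker f := by
    intro hle
    have h2 : (⊤ : Submodule R M) ≤ LinearMap.ker f := by
      rw [← IsSemisimpleModule.sSup_simples_eq_top R M]
      exact sSup_le hle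
    exact hf (LinearMap.ker_eq_top.mp (top_le_iff.mp h2))
  push_neg at hne
  obtain ⟨S, hS, hSk⟩ := hne
  refine ⟨S, hS, ?_⟩
  haveI := hS
  rw [← LinearMap.ker_eq_bot]
  rcases hS.eq_bot_or_eq_top (LinearMap.ker (f ∘ₗ S.subtype)) with hb | ht
  · exact hb
  · exfalso
    apply hSk
    intro x hx
    have : (⟨x, hx⟩ : ↥S) ∈ LinearMap.ker (f ∘ₗ S.subtype) := ht ▸ Submodule.mem_top
    simpa using this

theorem exists_simple_sub {M : Type u} [AddCommGroup M] [Module R M]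
    [IsSemisimpleModule R M] [Nontrivial M] :
    ∃ S : Submodule R M, IsSimpleModule R ↥S := by
  obtain ⟨S, hS, _⟩ := exists_simple_comp_injective (R := R) (LinearMap.id : M →ₗ[R] M)
    (fun h => by
      obtain ⟨x, hx⟩ := exists_ne (0 : M)
      exact hx (by simpa using LinearMap.congr_fun h x))
  exact ⟨S, hS⟩

theorem nu_zero_left {M N : Type u} [AddCommGroup M] [Module R M] [AddCommGroup N] [Module R N]
    [Module ℂ N] [IsScalarTower ℂ R N] (h : Subsingleton M) : nu R M N = 0 := by
  haveI : Subsingleton (M →ₗ[R] N) :=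
    ⟨fun f g => LinearMap.ext fun x => by rw [Subsingleton.elim x 0, map_zero, map_zero]⟩
  exact Module.finrank_zero_of_subsingleton

theorem nu_zero_right {M N : Type u} [AddCommGroup M] [Module R M] [AddCommGroup N] [Module R N]
    [Module ℂ N] [IsScalarTower ℂ R N] (h : Subsingleton N) : nu R M N = 0 := by
  haveI : Subsingleton (M →ₗ[R] N) :=
    ⟨fun f g => LinearMap.ext fun x => Subsingleton.elim _ _⟩
  exact Module.finrank_zero_of_subsingleton

theorem subsingleton_of_nu_self {M : Type u} [AddCommGroup M] [Module R M] [Module ℂ M]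
    [IsScalarTower ℂ R M] [FiniteDimensional ℂ M] (h : nu R M M = 0) : Subsingleton M := by
  haveI := homFD (R := R) M M
  haveI : Subsingleton (M →ₗ[R] M) := Module.finrank_zero_iff.mp h
  refine ⟨fun a b => ?_⟩
  have h1 : (LinearMap.id : M →ₗ[R] M) = 0 := Subsingleton.elim _ _
  calc a = LinearMap.id (R := R) a := rfl
    _ = (0 : M →ₗ[R] M) a := by rw [h1]
    _ = (0 : M →ₗ[R] M) b := rfl
    _ = LinearMap.id (R := R) b := by rw [h1]
    _ = b := rfl

theorem nu_symm_simples {S T : Type u}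
    [AddCommGroup S] [Module R S] [Module ℂ S] [IsScalarTower ℂ R S]
    [AddCommGroup T] [Module R T] [Module ℂ T] [IsScalarTower ℂ R T]
    [IsSimpleModule R S] [IsSimpleModule R T] : nu R S T = nu R T S := by
  by_cases h : Nonempty (S ≃ₗ[R] T)
  · obtain ⟨e⟩ := h
    rw [nu_congr_left (N := T) e, nu_congr_right (M := T) (N := S) e]
  · haveI h1 : Subsingleton (S →ₗ[R] T) := by
      refine ⟨fun f g => ?_⟩
      have hf : f = 0 := by
        rcases f.bijective_or_eq_zero with hb | hz
        · exact absurd ⟨LinearEquiv.ofBijective f hb⟩ h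
        · exact hz
      have hg : g = 0 := by
        rcases g.bijective_or_eq_zero with hb | hz
        · exact absurd ⟨LinearEquiv.ofBijective g hb⟩ h
        · exact hz
      rw [hf, hg]
    haveI h2 : Subsingleton (T →ₗ[R] S) := by
      refine ⟨fun f g => ?_⟩
      have hf : f = 0 := by
        rcases f.bijective_or_eq_zero with hb | hz
        · exact absurd ⟨(LinearEquiv.ofBijective f hb).symm⟩ h
        · exact hz
      have hg : g = 0 := by
        rcases g.bijective_or_eq_zero with hb | hz
        · exact absurd ⟨(LinearEquiv.ofBijective g hb).symm⟩ h
        · exact hz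
      rw [hf, hg]
    rw [nu, nu, Module.finrank_zero_of_subsingleton, Module.finrank_zero_of_subsingleton]

/-- Symmetry of `nu` against a simple module, by induction on dimension. -/
theorem nu_symm_simple_left :
    ∀ (n : ℕ) (S N : Type u)
    [AddCommGroup S] [Module R S] [Module ℂ S] [IsScalarTower ℂ R S]
    [AddCommGroup N] [Module R N] [Module ℂ N] [IsScalarTower ℂ R N]
    [IsSimpleModule R S] [IsSemisimpleModule R N] [FiniteDimensional ℂ S]
    [FiniteDimensional ℂ N],
    Module.finrank ℂ N = n → nu R S N = nu R N S := by
  intro n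
  induction n using Nat.strong_induction_on with
  | _ n ih =>
    intro S N _ _ _ _ _ _ _ _ _ _ _ _ hn
    by_cases hs : Subsingleton N
    · rw [nu_zero_left (R := R) hs, nu_zero_right (R := R) hs]
    · haveI : Nontrivial N := not_subsingleton_iff_nontrivial.mp hs
      obtain ⟨T, hT⟩ := exists_simple_sub (R := R) (M := N)
      haveI := hT
      obtain ⟨C, hC⟩ := exists_isCompl T
      haveI := subFD (R := R) T
      haveI := subFD (R := R) C
      haveI : Nontrivial ↥T := IsSimpleModule.nontrivial R ↥T
      have e := Submodule.prodEquivOfIsCompl T C hC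
      have hrank := finrank_of_isCompl (R := R) T C hC
      have hTpos : 0 < Module.finrank ℂ ↥T := Module.finrank_pos
      have h1 : nu R S N = nu R S ↥T + nu R S ↥C := by
        rw [nu_congr_right (M := S) e.symm, nu_prod_right]
      have h2 : nu R N S = nu R ↥T S + nu R ↥C S := by
        rw [nu_congr_left (N := S) e.symm, nu_prod_left]
      rw [h1, h2, nu_symm_simples (R := R) (S := S) (T := ↥T),
        ih (Module.finrank ℂ ↥C) (by omega) S ↥C rfl]

/-- Full symmetry of `nu`. -/
theorem nu_symm :
    ∀ (n : ℕ) (M N : Type u)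
    [AddCommGroup M] [Module R M] [Module ℂ M] [IsScalarTower ℂ R M]
    [AddCommGroup N] [Module R N] [Module ℂ N] [IsScalarTower ℂ R N]
    [IsSemisimpleModule R M] [IsSemisimpleModule R N]
    [FiniteDimensional ℂ M] [FiniteDimensional ℂ N],
    Module.finrank ℂ M = n → nu R M N = nu R N M := by
  intro n
  induction n using Nat.strong_induction_on with
  | _ n ih =>
    intro M N _ _ _ _ _ _ _ _ _ _ _ _ hn
    by_cases hs : Subsingleton M
    · rw [nu_zero_left (R := R) hs, nu_zero_right (R := R) hs]
    · haveI : Nontrivial M := not_subsingleton_iff_nontrivial.mp hs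
      obtain ⟨S, hS⟩ := exists_simple_sub (R := R) (M := M)
      haveI := hS
      obtain ⟨C, hC⟩ := exists_isCompl S
      haveI := subFD (R := R) S
      haveI := subFD (R := R) C
      haveI : Nontrivial ↥S := IsSimpleModule.nontrivial R ↥S
      have e := Submodule.prodEquivOfIsCompl S C hC
      have hrank := finrank_of_isCompl (R := R) S C hC
      have hSpos : 0 < Module.finrank ℂ ↥S := Module.finrank_pos
      have h1 : nu R M N = nu R ↥S N + nu R ↥C N := by
        rw [nu_congr_left (N := N) e.symm, nu_prod_left]
      have h2 : nu R N M = nu R N ↥S + nu R N ↥C := by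
        rw [nu_congr_right (M := N) e.symm, nu_prod_right]
      rw [h1, h2, nu_symm_simple_left (R := R) (Module.finrank ℂ N) ↥S N rfl,
        ih (Module.finrank ℂ ↥C) (by omega) ↥C N rfl]

end Structure

section Main

theorem nu_prod_prod (M M' N N' : Type u)
    [AddCommGroup M] [Module R M] [Module ℂ M] [IsScalarTower ℂ R M]
    [AddCommGroup M'] [Module R M'] [Module ℂ M'] [IsScalarTower ℂ R M']
    [AddCommGroup N] [Module R N] [Module ℂ N] [IsScalarTower ℂ R N]
    [AddCommGroup N'] [Module R N'] [Module ℂ N'] [IsScalarTower ℂ R N']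
    [FiniteDimensional ℂ M] [FiniteDimensional ℂ M'] [FiniteDimensional ℂ N]
    [FiniteDimensional ℂ N'] :
    nu R (M × M') (N × N') = nu R M N + nu R M N' + nu R M' N + nu R M' N' := by
  rw [nu_prod_left, nu_prod_right, nu_prod_right]
  omega

/-- The key classification theorem: two finite-dimensional semisimple modules `P`, `Q` with
`ν(P,P) + ν(Q,Q) = 2 ν(P,Q)` are isomorphic. -/
theorem equiv_of_nu_eq_aux :
    ∀ (n : ℕ) (P Q : Type u)
    [AddCommGroup P] [Module R P] [Module ℂ P] [IsScalarTower ℂ R P]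
    [AddCommGroup Q] [Module R Q] [Module ℂ Q] [IsScalarTower ℂ R Q]
    [IsSemisimpleModule R P] [IsSemisimpleModule R Q]
    [FiniteDimensional ℂ P] [FiniteDimensional ℂ Q],
    Module.finrank ℂ P + Module.finrank ℂ Q = n →
    nu R P P + nu R Q Q = 2 * nu R P Q → Nonempty (P ≃ₗ[R] Q) := by
  intro n
  induction n using Nat.strong_induction_on with
  | _ n ih =>
    intro P Q _ _ _ _ _ _ _ _ _ _ _ _ hn h
    by_cases hz : nu R P Q = 0
    · rw [hz, Nat.mul_zero, Nat.add_eq_zero] at h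
      have hP : Subsingleton P := subsingleton_of_nu_self (R := R) h.1
      have hQ : Subsingleton Q := subsingleton_of_nu_self (R := R) h.2
      exact ⟨LinearEquiv.ofBijective (0 : P →ₗ[R] Q)
        ⟨fun a b _ => Subsingleton.elim a b, fun y => ⟨0, Subsingleton.elim _ _⟩⟩⟩
    · haveI := homFD (R := R) P Q
      haveI : Nontrivial (P →ₗ[R] Q) := Module.finrank_pos_iff.mp (Nat.pos_of_ne_zero hz)
      obtain ⟨f, hf⟩ := exists_ne (0 : P →ₗ[R] Q)
      obtain ⟨S, hSs, hinj⟩ := exists_simple_comp_injective (R := R) f hf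
      haveI := hSs
      set g := f ∘ₗ S.subtype with hg
      set T := LinearMap.range g with hT
      let eST : ↥S ≃ₗ[R] ↥T := LinearEquiv.ofInjective g hinj
      haveI : IsSimpleModule R ↥T := IsSimpleModule.congr eST.symm
      obtain ⟨C, hC⟩ := exists_isCompl S
      obtain ⟨D, hD⟩ := exists_isCompl T
      haveI := subFD (R := R) S
      haveI := subFD (R := R) C
      haveI := subFD (R := R) T
      haveI := subFD (R := R) D
      haveI : Nontrivial ↥S := IsSimpleModule.nontrivial R ↥S
      haveI : Nontrivial ↥T := IsSimpleModule.nontrivial R ↥T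
      let eP : (↥S × ↥C) ≃ₗ[R] P := Submodule.prodEquivOfIsCompl S C hC
      let eQ : (↥T × ↥D) ≃ₗ[R] Q := Submodule.prodEquivOfIsCompl T D hD
      have hrP := finrank_of_isCompl (R := R) S C hC
      have hrQ := finrank_of_isCompl (R := R) T D hD
      have hSpos : 0 < Module.finrank ℂ ↥S := Module.finrank_pos
      have hTpos : 0 < Module.finrank ℂ ↥T := Module.finrank_pos
      -- abbreviations
      set nSS := nu R ↥S ↥S
      set nSC := nu R ↥S ↥C
      set nSD := nu R ↥S ↥D
      set nCC := nu R ↥C ↥C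
      set nDD := nu R ↥D ↥D
      set nCD := nu R ↥C ↥D
      have hCS : nu R ↥C ↥S = nSC :=
        (nu_symm_simple_left (R := R) (Module.finrank ℂ ↥C) ↥S ↥C rfl).symm
      have hDS : nu R ↥D ↥S = nSD :=
        (nu_symm_simple_left (R := R) (Module.finrank ℂ ↥D) ↥S ↥D rfl).symm
      -- transfers along eST
      have hTT : nu R ↥T ↥T = nSS := by
        rw [← nu_congr_left (N := ↥T) eST, ← nu_congr_right (M := ↥S) eST]
      have hTD : nu R ↥T ↥D = nSD := by rw [← nu_congr_left (N := ↥D) eST]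
      have hDT : nu R ↥D ↥T = nSD := by rw [← nu_congr_right (M := ↥D) eST, hDS]
      have hST : nu R ↥S ↥T = nSS := by rw [← nu_congr_right (M := ↥S) eST]
      have hCT : nu R ↥C ↥T = nSC := by rw [← nu_congr_right (M := ↥C) eST, hCS]
      -- expansions
      have hPP : nu R P P = nSS + nSC + nSC + nCC := by
        rw [← nu_congr_left (N := P) eP, ← nu_congr_right (M := (↥S × ↥C)) eP,
          nu_prod_prod, hCS]
      have hQQ : nu R Q Q = nSS + nSD + nSD + nDD := by
        rw [← nu_congr_left (N := Q) eQ, ← nu_congr_right (M := (↥T × ↥D)) eQ,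
          nu_prod_prod, hTT, hTD, hDT]
      have hPQ : nu R P Q = nSS + nSD + nSC + nCD := by
        rw [← nu_congr_left (N := Q) eP, ← nu_congr_right (M := (↥S × ↥C)) eQ,
          nu_prod_prod, hST, hCT]
      rw [hPP, hQQ, hPQ] at h
      have hrec : nCC + nDD = 2 * nCD := by omega
      obtain ⟨e'⟩ := ih (Module.finrank ℂ ↥C + Module.finrank ℂ ↥D) (by omega) ↥C ↥D rfl hrec
      exact ⟨eP.symm.trans ((eST.prodCongr e').trans eQ)⟩

theorem equiv_of_nu_eq (P Q : Type u)
    [AddCommGroup P] [Module R P] [Module ℂ P] [IsScalarTower ℂ R P]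
    [AddCommGroup Q] [Module R Q] [Module ℂ Q] [IsScalarTower ℂ R Q]
    [IsSemisimpleModule R P] [IsSemisimpleModule R Q]
    [FiniteDimensional ℂ P] [FiniteDimensional ℂ Q]
    (h : nu R P P + nu R Q Q = 2 * nu R P Q) : Nonempty (P ≃ₗ[R] Q) :=
  equiv_of_nu_eq_aux (Module.finrank ℂ P + Module.finrank ℂ Q) P Q rfl h

end Main

end General


section Concrete

open scoped Matrix

variable (A : StarSubalgebra ℂ (Matrix ι ι ℂ))

/-- Multiplicity-free notation: `H` is the Euclidean space. -/
local notation "H" => EuclideanSpace ℂ ι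

instance : SMul ↥A (EuclideanSpace ℂ ι) := ⟨fun a v => appM (a : Matrix ι ι ℂ) v⟩

theorem smulH_def (a : ↥A) (v : EuclideanSpace ℂ ι) :
    a • v = (a : Matrix ι ι ℂ) *ᵥ v := rfl

instance : Module ↥A (EuclideanSpace ℂ ι) where
  one_smul v := by
    show WithLp.toLp 2 (((1 : ↥A) : Matrix ι ι ℂ) *ᵥ v.ofLp) = v
    rw [show ((1 : ↥A) : Matrix ι ι ℂ) = 1 from rfl, Matrix.one_mulVec]
  mul_smul a b v := by
    show WithLp.toLp 2 (((a * b : ↥A) : Matrix ι ι ℂ) *ᵥ v.ofLp)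
      = WithLp.toLp 2 ((a : Matrix ι ι ℂ) *ᵥ ((b : Matrix ι ι ℂ) *ᵥ v.ofLp))
    rw [Matrix.mulVec_mulVec]
    rfl
  smul_zero a := congrArg (WithLp.toLp 2) (Matrix.mulVec_zero _)
  smul_add a v w := congrArg (WithLp.toLp 2) (Matrix.mulVec_add _ _ _)
  add_smul a b v := by
    show WithLp.toLp 2 (((a + b : ↥A) : Matrix ι ι ℂ) *ᵥ v.ofLp) = _
    rw [show ((a + b : ↥A) : Matrix ι ι ℂ) = (a : Matrix ι ι ℂ) + b from rfl, Matrix.add_mulVec]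
    rfl
  zero_smul v := by
    show WithLp.toLp 2 (((0 : ↥A) : Matrix ι ι ℂ) *ᵥ v.ofLp) = 0
    rw [show ((0 : ↥A) : Matrix ι ι ℂ) = 0 from rfl, Matrix.zero_mulVec]
    rfl

instance : IsScalarTower ℂ ↥A (EuclideanSpace ℂ ι) :=
  ⟨fun c a v => by
    show WithLp.toLp 2 (((c • a : ↥A) : Matrix ι ι ℂ) *ᵥ v.ofLp)
      = c • WithLp.toLp 2 ((a : Matrix ι ι ℂ) *ᵥ v.ofLp)
    rw [show ((c • a : ↥A) : Matrix ι ι ℂ) = c • (a : Matrix ι ι ℂ) from rfl,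
      Matrix.smul_mulVec]
    rfl⟩

theorem fdA : FiniteDimensional ℂ ↥A :=
  FiniteDimensional.of_injective
    (⟨⟨fun x => (x : Matrix ι ι ℂ), fun _ _ => rfl⟩, fun _ _ => rfl⟩ :
      ↥A →ₗ[ℂ] Matrix ι ι ℂ) Subtype.val_injective

theorem nontrivialA [Nonempty ι] : Nontrivial ↥A := by
  refine ⟨1, 0, fun h => ?_⟩
  obtain ⟨i⟩ := (inferInstance : Nonempty ι)
  have h1 : ((1 : ↥A) : Matrix ι ι ℂ) i i = ((0 : ↥A) : Matrix ι ι ℂ) i i := by rw [h]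
  rw [show ((1 : ↥A) : Matrix ι ι ℂ) = 1 from rfl, show ((0 : ↥A) : Matrix ι ι ℂ) = 0 from rfl,
    Matrix.one_apply_eq] at h1
  exact one_ne_zero h1

/-- The embedding of `A` into the Euclidean space of matrices. -/
def embA : ↥A →ₗ[ℂ] EuclideanSpace ℂ (ι × ι) where
  toFun a := WithLp.toLp 2 (fun p : ι × ι => (a : Matrix ι ι ℂ) p.1 p.2)
  map_add' a b := rfl
  map_smul' c a := rfl

theorem embA_apply (a : ↥A) (p : ι × ι) : embA A a p = (a : Matrix ι ι ℂ) p.1 p.2 := rfl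

theorem embA_injective : Function.Injective (embA A) := by
  intro x y h
  apply Subtype.ext
  ext i j
  exact congrFun (congrArg WithLp.ofLp h) (i, j)

theorem embA_inner_mul (c y x : ↥A) :
    ⟪embA A y, embA A (c * x)⟫_ℂ = ⟪embA A (star c * y), embA A x⟫_ℂ := by
  simp only [PiLp.inner_apply, RCLike.inner_apply, embA_apply, Fintype.sum_prod_type]
  simp only [show ∀ u v : ↥A, ((u * v : ↥A) : Matrix ι ι ℂ) = (u : Matrix ι ι ℂ) * v
      from fun _ _ => rfl,
    show ((star c : ↥A) : Matrix ι ι ℂ) = star (c : Matrix ι ι ℂ) from rfl,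
    Matrix.mul_apply, Matrix.star_apply]
  simp only [map_sum, map_mul, Finset.mul_sum, Finset.sum_mul, starRingEnd_apply, star_star]
  have hswap2 : ∀ f : ι → ι → ι → ℂ,
      (∑ i, ∑ j, ∑ k, f i j k) = ∑ k, ∑ i, ∑ j, f i j k := by
    intro f
    calc (∑ i, ∑ j, ∑ k, f i j k) = ∑ i, ∑ k, ∑ j, f i j k :=
          Finset.sum_congr rfl fun i _ => Finset.sum_comm
      _ = ∑ k, ∑ i, ∑ j, f i j k := Finset.sum_comm
  rw [hswap2]
  refine Finset.sum_congr rfl fun i _ => ?_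
  rw [Finset.sum_comm]
  refine Finset.sum_congr rfl fun j _ => ?_
  refine Finset.sum_congr rfl fun k _ => ?_
  ring

theorem isSemisimpleRingA : IsSemisimpleRing ↥A := by
  refine (isSemisimpleModule_iff _ _).mpr ⟨fun p => ?_⟩
  let q : Submodule ↥A ↥A :=
    { carrier := {x : ↥A | ∀ y ∈ p, ⟪embA A y, embA A x⟫_ℂ = 0}
      add_mem' := fun {u v} hu hv y hy => by rw [map_add, inner_add_right, hu y hy, hv y hy,
        add_zero]
      zero_mem' := fun y hy => by rw [map_zero, inner_zero_right]
      smul_mem' := fun c x hx y hy => by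
        rw [show c • x = c * x from rfl, embA_inner_mul]
        exact hx _ (by rw [← smul_eq_mul]; exact p.smul_mem (star c) hy) }
  refine ⟨q, IsCompl.of_eq ?_ ?_⟩
  · rw [Submodule.eq_bot_iff]
    rintro x ⟨hxp, hxq⟩
    have h0 : ⟪embA A x, embA A x⟫_ℂ = 0 := hxq x hxp
    rw [inner_self_eq_zero] at h0
    exact embA_injective A (by rw [h0, map_zero])
  · rw [Submodule.eq_top_iff']
    intro x
    haveI := fdA A
    set W : Submodule ℂ (EuclideanSpace ℂ (ι × ι)) :=
      (p.restrictScalars ℂ).map (embA A) with hW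
    obtain ⟨u, hu, v, hv, hx⟩ := W.exists_add_mem_mem_orthogonal (embA A x)
    obtain ⟨y, hy, hyu⟩ := hu
    rw [Submodule.mem_sup]
    refine ⟨y, hy, x - y, ?_, by abel⟩
    intro z hz
    have hFz : embA A z ∈ W := Submodule.mem_map_of_mem hz
    have hxy : embA A (x - y) = v := by rw [map_sub, hx, hyu]; abel
    rw [hxy]
    exact (Submodule.mem_orthogonal W v).mp hv _ hFz

/-- A commutant element acts `A`-linearly on `H`. -/
def mulVecCom (M : Matrix ι ι ℂ) (hM : M ∈ commutant A) :
    EuclideanSpace ℂ ι →ₗ[↥A] EuclideanSpace ℂ ι where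
  toFun v := WithLp.toLp 2 (M *ᵥ v.ofLp)
  map_add' v w := congrArg (WithLp.toLp 2) (Matrix.mulVec_add M v.ofLp w.ofLp)
  map_smul' a v := by
    show WithLp.toLp 2 (M *ᵥ ((a : Matrix ι ι ℂ) *ᵥ v.ofLp))
      = WithLp.toLp 2 ((a : Matrix ι ι ℂ) *ᵥ (M *ᵥ v.ofLp))
    rw [Matrix.mulVec_mulVec, Matrix.mulVec_mulVec, hM (a : Matrix ι ι ℂ) a.2]

/-- The commutant is isomorphic to `End_A(H)`. -/
noncomputable def commutantEquiv :
    ↥(commutant A) ≃ₗ[ℂ] (EuclideanSpace ℂ ι →ₗ[↥A] EuclideanSpace ℂ ι) where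
  toFun M := mulVecCom A M.1 M.2
  map_add' M N := by
    apply LinearMap.ext
    intro v
    show WithLp.toLp 2 (((M : Matrix ι ι ℂ) + (N : Matrix ι ι ℂ)) *ᵥ v.ofLp)
        = WithLp.toLp 2 ((M : Matrix ι ι ℂ) *ᵥ v.ofLp) + WithLp.toLp 2 ((N : Matrix ι ι ℂ) *ᵥ v.ofLp)
    exact congrArg (WithLp.toLp 2) (Matrix.add_mulVec _ _ _)
  map_smul' c M := by
    apply LinearMap.ext
    intro v
    show WithLp.toLp 2 ((c • (M : Matrix ι ι ℂ)) *ᵥ v.ofLp)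
      = c • WithLp.toLp 2 ((M : Matrix ι ι ℂ) *ᵥ v.ofLp)
    exact congrArg (WithLp.toLp 2) (Matrix.smul_mulVec _ _ _)
  invFun f := by
    refine ⟨LinearMap.toMatrix'
      ((WithLp.linearEquiv 2 ℂ (∀ _ : ι, ℂ)).conj (f.restrictScalars ℂ)), fun a ha => ?_⟩
    set g := (WithLp.linearEquiv 2 ℂ (∀ _ : ι, ℂ)).conj (f.restrictScalars ℂ) with hg
    have key : ∀ w : ι → ℂ, LinearMap.toMatrix' g *ᵥ w = (f (WithLp.toLp 2 w)).ofLp := by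
      intro w
      rw [← Matrix.toLin'_apply, Matrix.toLin'_toMatrix']
      rfl
    apply LinearMap.toMatrix'.symm.injective
    apply LinearMap.ext
    intro w
    show (LinearMap.toMatrix' g * a) *ᵥ w = (a * LinearMap.toMatrix' g) *ᵥ w
    rw [← Matrix.mulVec_mulVec, ← Matrix.mulVec_mulVec, key (a *ᵥ w), key w]
    exact congrArg WithLp.ofLp (f.map_smul (⟨a, ha⟩ : ↥A) (WithLp.toLp 2 w))
  left_inv M := by
    apply Subtype.ext
    show LinearMap.toMatrix' _ = (M : Matrix ι ι ℂ)
    have : (WithLp.linearEquiv 2 ℂ (∀ _ : ι, ℂ)).conj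
        ((mulVecCom A M.1 M.2).restrictScalars ℂ) = Matrix.toLin' (M : Matrix ι ι ℂ) := by
      apply LinearMap.ext
      intro w
      rw [Matrix.toLin'_apply]
      rfl
    rw [this, LinearMap.toMatrix'_toLin']
  right_inv f := by
    apply LinearMap.ext
    intro v
    show WithLp.toLp 2 (LinearMap.toMatrix' _ *ᵥ v.ofLp) = f v
    rw [← Matrix.toLin'_apply, Matrix.toLin'_toMatrix']
    rfl

theorem finrank_commutant :
    Module.finrank ℂ ↥(commutant A) =
      nu ↥A (EuclideanSpace ℂ ι) (EuclideanSpace ℂ ι) :=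
  (commutantEquiv A).finrank_eq

theorem nu_A_A : nu ↥A ↥A ↥A = Module.finrank ℂ ↥A :=
  (LinearMap.ringLmapEquivSelf ↥A ℂ ↥A).finrank_eq

theorem nu_A_H : nu ↥A ↥A (EuclideanSpace ℂ ι) = Fintype.card ι := by
  rw [nu, (LinearMap.ringLmapEquivSelf ↥A ℂ (EuclideanSpace ℂ ι)).finrank_eq,
    finrank_euclideanSpace]

theorem hFreePow_iff (k : ℕ) :
    HFreePow A k ↔
      ∃ m : ℕ, Nonempty ((Fin m → ↥A) ≃ₗ[↥A] (Fin k → EuclideanSpace ℂ ι)) := by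
  constructor
  · rintro ⟨m, v, hbij⟩
    exact ⟨m, ⟨LinearEquiv.ofBijective
      { toFun := fun a j => ∑ i, a i • v i j
        map_add' := fun a b => by
          funext j
          show (∑ i, (a i + b i) • v i j) = (∑ i, a i • v i j) + ∑ i, b i • v i j
          rw [← Finset.sum_add_distrib]
          exact Finset.sum_congr rfl fun i _ => add_smul _ _ _
        map_smul' := fun c a => by
          funext j
          show (∑ i, (c * a i) • v i j) = c • ∑ i, a i • v i j
          refine Eq.trans ?_ Finset.smul_sum.symm
          exact Finset.sum_congr rfl fun i _ => mul_smul _ _ _ } hbij⟩⟩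
  · rintro ⟨m, ⟨e⟩⟩
    refine ⟨m, fun i => e (Pi.single i 1), ?_⟩
    have key : (fun a : Fin m → ↥A =>
        fun j => ∑ i, appM ((a i : Matrix ι ι ℂ)) (e (Pi.single i 1) j)) = ⇑e := by
      funext a
      show (fun j => ∑ i, a i • (e (Pi.single i 1) j)) = e a
      calc (fun j => ∑ i, a i • (e (Pi.single i 1) j))
          = ∑ i, a i • (e (Pi.single i 1)) := by
            funext j
            rw [Finset.sum_apply]
            rfl
        _ = ∑ i, e (a i • Pi.single i 1) := by
            refine Finset.sum_congr rfl fun i _ => (e.map_smul _ _).symm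
        _ = e (∑ i, a i • Pi.single i 1) := (map_sum e _ _).symm
        _ = e a := by
            congr 1
            calc (∑ i, a i • (Pi.single i 1 : Fin m → ↥A))
                = ∑ i, Pi.single i (a i) := by
                  refine Finset.sum_congr rfl fun i _ => ?_
                  rw [← Pi.single_smul, smul_eq_mul, mul_one]
              _ = a := Finset.univ_sum_single a
    rw [key]
    exact e.bijective

end Concrete

/-- `H^k` is free over `A` for some `k ≥ 1` iff
`dim A · dim A' = (dim H)²`; and in this case `H` itself is free over `A` iff
`dim A` divides `dim H`. -/
theorem free_module_iff_dim_commutant {ι : Type*} [Fintype ι] [DecidableEq ι] [Nonempty ι]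
    (A : StarSubalgebra ℂ (Matrix ι ι ℂ)) :
    ((∃ k : ℕ, 0 < k ∧ HFreePow A k) ↔
      Module.finrank ℂ ↥A * Module.finrank ℂ ↥(commutant A) = (Fintype.card ι) ^ 2) ∧
    ((∃ k : ℕ, 0 < k ∧ HFreePow A k) →
      (HFreePow A 1 ↔ Module.finrank ℂ ↥A ∣ Fintype.card ι)) := by
  haveI : IsSemisimpleRing ↥A := isSemisimpleRingA A
  haveI : FiniteDimensional ℂ ↥A := fdA A
  haveI : Nontrivial ↥A := nontrivialA A
  set a := Module.finrank ℂ ↥A with ha'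
  set b := Module.finrank ℂ ↥(commutant A) with hb'
  set n := Fintype.card ι with hn'
  have hnpos : 0 < n := Fintype.card_pos
  have hapos : 0 < a := Module.finrank_pos
  have hbH : b = nu ↥A (EuclideanSpace ℂ ι) (EuclideanSpace ℂ ι) := finrank_commutant A
  have haa : nu ↥A ↥A ↥A = a := nu_A_A A
  have hah : nu ↥A ↥A (EuclideanSpace ℂ ι) = n := nu_A_H A
  have hfH : Module.finrank ℂ (EuclideanSpace ℂ ι) = n := finrank_euclideanSpace
  haveI : Nontrivial (EuclideanSpace ℂ ι) :=
    Module.finrank_pos_iff.mp (by rw [hfH]; exact hnpos)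
  have hha : nu ↥A (EuclideanSpace ℂ ι) ↥A = n := by
    rw [nu_symm (R := ↥A) (Module.finrank ℂ (EuclideanSpace ℂ ι)) (EuclideanSpace ℂ ι) ↥A rfl,
      hah]
  have hiff : (∃ k : ℕ, 0 < k ∧ HFreePow A k) ↔ a * b = n ^ 2 := by
    constructor
    · rintro ⟨k, hk, hfree⟩
      rw [hFreePow_iff] at hfree
      obtain ⟨m, ⟨e⟩⟩ := hfree
      haveI : Nonempty (Fin k) := ⟨⟨0, hk⟩⟩
      have hm : 0 < m := by
        rcases Nat.eq_zero_or_pos m with h0 | h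
        · exfalso
          subst h0
          obtain ⟨x, y, hxy⟩ := exists_pair_ne (EuclideanSpace ℂ ι)
          haveI : Subsingleton (Fin k → EuclideanSpace ℂ ι) := e.toEquiv.symm.subsingleton
          exact hxy (congrFun (Subsingleton.elim (fun _ => x) (fun _ => y)) (⟨0, hk⟩ : Fin k))
        · exact h
      have h1 : k * (k * nu ↥A (EuclideanSpace ℂ ι) (EuclideanSpace ℂ ι))
          = m * (k * nu ↥A ↥A (EuclideanSpace ℂ ι)) := by
        calc k * (k * nu ↥A (EuclideanSpace ℂ ι) (EuclideanSpace ℂ ι))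
            = nu ↥A (Fin k → EuclideanSpace ℂ ι) (Fin k → EuclideanSpace ℂ ι) := by
              rw [nu_pow_left, nu_pow_right]
          _ = nu ↥A (Fin m → ↥A) (Fin k → EuclideanSpace ℂ ι) :=
              (nu_congr_left (R := ↥A) e).symm
          _ = m * (k * nu ↥A ↥A (EuclideanSpace ℂ ι)) := by
              rw [nu_pow_left, nu_pow_right]
      have h2 : m * (m * nu ↥A ↥A ↥A) = m * (k * nu ↥A ↥A (EuclideanSpace ℂ ι)) := by
        calc m * (m * nu ↥A ↥A ↥A) = nu ↥A (Fin m → ↥A) (Fin m → ↥A) := by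
              rw [nu_pow_left, nu_pow_right]
          _ = nu ↥A (Fin m → ↥A) (Fin k → EuclideanSpace ℂ ι) := nu_congr_right (R := ↥A) e
          _ = m * (k * nu ↥A ↥A (EuclideanSpace ℂ ι)) := by
              rw [nu_pow_left, nu_pow_right]
      rw [← hbH, hah] at h1
      rw [haa, hah] at h2
      have e1 : k * b = m * n := by
        have h1' : k * (k * b) = k * (m * n) := by
          rw [h1]; ring
        exact Nat.eq_of_mul_eq_mul_left hk h1'
      have e2 : m * a = k * n := by
        have h2' : m * (m * a) = m * (k * n) := h2
        exact Nat.eq_of_mul_eq_mul_left hm h2'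
      have key : (m * k) * (a * b) = (m * k) * (n ^ 2) := by
        calc (m * k) * (a * b) = (m * a) * (k * b) := by ring
          _ = (k * n) * (m * n) := by rw [e1, e2]
          _ = (m * k) * (n ^ 2) := by ring
      exact Nat.eq_of_mul_eq_mul_left (Nat.mul_pos hm hk) key
    · intro hdim
      refine ⟨a, hapos, ?_⟩
      rw [hFreePow_iff]
      refine ⟨n, ?_⟩
      apply equiv_of_nu_eq
      rw [nu_pow_left, nu_pow_right, nu_pow_left, nu_pow_right, nu_pow_left, nu_pow_right,
        haa, hah, ← hbH]
      rw [show a * (a * b) = a * n ^ 2 by rw [hdim]]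
      ring
  refine ⟨hiff, fun hex => ?_⟩
  have hdim : a * b = n ^ 2 := hiff.mp hex
  constructor
  · intro h1
    rw [hFreePow_iff] at h1
    obtain ⟨m, ⟨e⟩⟩ := h1
    have hfr : Module.finrank ℂ (Fin m → ↥A) = Module.finrank ℂ (Fin 1 → EuclideanSpace ℂ ι) :=
      (e.restrictScalars ℂ).finrank_eq
    rw [Module.finrank_pi_fintype, Module.finrank_pi_fintype] at hfr
    simp only [Finset.sum_const, Finset.card_univ, Fintype.card_fin, smul_eq_mul, one_mul,
      hfH] at hfr
    exact ⟨m, by rw [← hfr]; ring⟩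
  · rintro ⟨m, hm⟩
    rw [hFreePow_iff]
    refine ⟨m, ?_⟩
    apply equiv_of_nu_eq
    rw [nu_pow_left, nu_pow_right, nu_pow_left, nu_pow_right, nu_pow_left, nu_pow_right,
      haa, hah, ← hbH]
    have hb2 : b = m * (m * a) := by
      have : a * b = a * (m * (m * a)) := by
        rw [hdim, hm]; ring
      exact Nat.eq_of_mul_eq_mul_left hapos this
    rw [hb2, hm]
    ring

end MU
end
end

section
/- Let H be a finite-dimensional Hilbert space of dimension n with normalized trace τ, and A, B unital *-subalgebras of L(H) with τ(ab)=τ(a)τ(b) for all a∈A, b∈B. If f̂ is a unit vector with θ_{f̂,f̂} ∈ A and dim B = n, then θ_{f̂,f̂} is central in A. -/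
open scoped InnerProductSpace ComplexOrder

noncomputable section

namespace MU

variable {ι : Type*} [Fintype ι] [DecidableEq ι]

/-- The normalized trace on `L(H)`. -/
def ntr {ι : Type*} [Fintype ι] (M : Matrix ι ι ℂ) : ℂ :=
  M.trace / (Fintype.card ι)

/-- The rank-one orthogonal projection `θ_{f,f}` onto `ℂf` (for a unit vector `f`). -/
def proj1 {ι : Type*} [Fintype ι] (f : EuclideanSpace ℂ ι) : Matrix ι ι ℂ :=
  fun i j => f i * (starRingEnd ℂ) (f j)

/-! ### Auxiliary lemmas for Statement 19 -/

open scoped Matrix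

private lemma sum3_comm' {α β γ : Type*} [Fintype α] [Fintype β] [Fintype γ]
    (g : α → β → γ → ℂ) :
    ∑ j, ∑ k, ∑ l, g j k l = ∑ l, ∑ j, ∑ k, g j k l := by
  have h : ∀ j, ∑ k, ∑ l, g j k l = ∑ l, ∑ k, g j k l := fun j => Finset.sum_comm
  simp_rw [h]
  exact Finset.sum_comm

private lemma sum_conj_self_eq_zero {κ : Type*} [Fintype κ] {v : κ → ℂ}
    (h : ∑ i, (starRingEnd ℂ) (v i) * v i = 0) : ∀ i, v i = 0 := by
  have h' : ∑ i, Complex.normSq (v i) = 0 := by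
    have h2 : ((∑ i, Complex.normSq (v i) : ℝ) : ℂ) = 0 := by
      push_cast
      simpa [Complex.normSq_eq_conj_mul_self] using h
    exact_mod_cast h2
  intro i
  have h3 := (Finset.sum_eq_zero_iff_of_nonneg
    (fun i _ => Complex.normSq_nonneg (v i))).1 h' i (Finset.mem_univ i)
  exact Complex.normSq_eq_zero.1 h3

private lemma trace_proj1_mul {ι : Type*} [Fintype ι]
    (f : EuclideanSpace ℂ ι) (M : Matrix ι ι ℂ) :
    (proj1 f * M).trace = ∑ j, ∑ k, (starRingEnd ℂ) (f j) * M j k * f k := by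
  rw [Matrix.trace]
  simp only [Matrix.diag_apply, Matrix.mul_apply, proj1]
  rw [Finset.sum_comm]
  exact Finset.sum_congr rfl fun j _ => Finset.sum_congr rfl fun i _ => by ring

private lemma S_adj_mul {ι : Type*} [Fintype ι]
    (f : EuclideanSpace ℂ ι) (N M : Matrix ι ι ℂ) :
    ∑ j, ∑ k, (starRingEnd ℂ) (f j) * (Nᴴ * M) j k * f k
      = ∑ l, (starRingEnd ℂ) (N.mulVec f l) * (M.mulVec f l) := by
  simp only [Matrix.mul_apply, Matrix.conjTranspose_apply, Matrix.mulVec, dotProduct,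
    map_sum, map_mul, Finset.sum_mul, Finset.mul_sum, Complex.star_def]
  rw [sum3_comm']
  refine Finset.sum_congr rfl fun l _ => ?_
  rw [Finset.sum_comm]
  exact Finset.sum_congr rfl fun k _ => Finset.sum_congr rfl fun j _ => by ring

private lemma trace_proj1_mul_conjTranspose {ι : Type*} [Fintype ι]
    (f : EuclideanSpace ℂ ι) (a : Matrix ι ι ℂ) :
    (proj1 f * aᴴ).trace = (starRingEnd ℂ) ((proj1 f * a).trace) := by
  rw [trace_proj1_mul, trace_proj1_mul, map_sum, Finset.sum_comm]
  refine Finset.sum_congr rfl fun j _ => ?_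
  rw [map_sum]
  refine Finset.sum_congr rfl fun k _ => ?_
  simp only [Matrix.conjTranspose_apply, map_mul, Complex.conj_conj, starRingEnd_apply,
    star_star]
  ring

/-- if moreover `dim B = n`, the rank-one projection `θ_{f̂,f̂}` is
central in `A`. -/
theorem proj_central_of_orthogonal_pair {ι : Type*} [Fintype ι] [DecidableEq ι] [Nonempty ι]
    (A B : StarSubalgebra ℂ (Matrix ι ι ℂ))
    (hAB : ∀ a ∈ A, ∀ b ∈ B, ntr (a * b) = ntr a * ntr b)
    (fHat : EuclideanSpace ℂ ι) (hfHat : ‖fHat‖ = 1)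
    (hproj : proj1 fHat ∈ A)
    (hB : Module.finrank ℂ ↥B = Fintype.card ι) :
    ∀ a ∈ A, a * proj1 fHat = proj1 fHat * a := by
  classical
  set f : EuclideanSpace ℂ ι := fHat with hfdef
  set p : Matrix ι ι ℂ := proj1 f with hpdef
  have hn : (Fintype.card ι : ℂ) ≠ 0 := by
    exact_mod_cast (Nat.cast_ne_zero (R := ℂ)).2 Fintype.card_ne_zero
  -- `Σ conj (f i) * f i = 1`
  have hf1 : ∑ i, (starRingEnd ℂ) (f i) * f i = 1 := by
    have h1 : (inner ℂ f f : ℂ) = 1 := by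
      rw [inner_self_eq_norm_sq_to_K, hfdef, hfHat]
      norm_num
    have h2 : (inner ℂ f f : ℂ) = ∑ i, (starRingEnd ℂ) (f i) * f i := by
      simp only [PiLp.inner_apply, RCLike.inner_apply']
    rw [← h2, h1]
  have htrp : p.trace = 1 := by
    rw [hpdef, Matrix.trace]
    have hd : ∀ i, Matrix.diag (proj1 f) i = (starRingEnd ℂ) (f i) * f i :=
      fun i => mul_comm _ _
    rw [Finset.sum_congr rfl fun i _ => hd i]
    exact hf1
  -- splitting consequence
  have keyS : ∀ x ∈ A, ∀ b ∈ B,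
      (p * (x * b)).trace * (Fintype.card ι : ℂ) = (p * x).trace * b.trace := by
    intro x hx b hb
    have h := hAB (p * x) (mul_mem hproj hx) b hb
    unfold ntr at h
    rw [mul_assoc] at h
    field_simp at h
    refine mul_right_cancel₀ hn ?_
    linear_combination (Fintype.card ι : ℂ) * h
  have Sb : ∀ b ∈ B, (p * b).trace * (Fintype.card ι : ℂ) = b.trace := by
    intro b hb
    have h := keyS 1 (one_mem A) b hb
    rw [one_mul, mul_one, htrp, one_mul] at h
    exact h
  -- the evaluation map `B → H`, `b ↦ b f`
  let φ : ↥B →ₗ[ℂ] (EuclideanSpace ℂ ι) :=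
    { toFun := fun b => (WithLp.toLp 2 ((b : Matrix ι ι ℂ).mulVec f) : EuclideanSpace ℂ ι)
      map_add' := fun x y => by
        have hxy : ((x + y : ↥B) : Matrix ι ι ℂ) = (x : Matrix ι ι ℂ) + y := rfl
        ext i
        show ((x + y : ↥B) : Matrix ι ι ℂ).mulVec f i
          = (x : Matrix ι ι ℂ).mulVec f i + (y : Matrix ι ι ℂ).mulVec f i
        rw [hxy, Matrix.add_mulVec]
        rfl
      map_smul' := fun c x => by
        have hcx : ((c • x : ↥B) : Matrix ι ι ℂ) = c • (x : Matrix ι ι ℂ) := rfl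
        ext i
        show ((c • x : ↥B) : Matrix ι ι ℂ).mulVec f i = c * (x : Matrix ι ι ℂ).mulVec f i
        rw [hcx, Matrix.smul_mulVec]
        rfl }
  have hφ : ∀ b : ↥B, ∀ i, φ b i = (b : Matrix ι ι ℂ).mulVec f i := fun b i => rfl
  -- φ is injective
  have hφ0 : ∀ b : ↥B, φ b = 0 → b = 0 := by
    intro b hb0
    have hv : ∀ i, (b : Matrix ι ι ℂ).mulVec f i = 0 := by
      intro i
      have := congrFun (congrArg (fun (x : EuclideanSpace ℂ ι) => (x : ι → ℂ)) hb0) i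
      simpa [hφ] using this
    have hmem : ((b : Matrix ι ι ℂ)ᴴ * (b : Matrix ι ι ℂ)) ∈ B := by
      have := mul_mem (star_mem b.2) b.2
      simpa [Matrix.star_eq_conjTranspose] using this
    have hS := Sb _ hmem
    have hS0 : (p * ((b : Matrix ι ι ℂ)ᴴ * (b : Matrix ι ι ℂ))).trace = 0 := by
      rw [hpdef, trace_proj1_mul, S_adj_mul]
      refine Finset.sum_eq_zero fun l _ => ?_
      rw [hv l, mul_zero]
    rw [hS0, zero_mul] at hS
    -- hS : 0 = trace (bᴴ b); conclude b = 0
    have h2 : ∑ q : ι × ι, (starRingEnd ℂ) ((b : Matrix ι ι ℂ) q.2 q.1)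
        * (b : Matrix ι ι ℂ) q.2 q.1 = 0 := by
      rw [Fintype.sum_prod_type]
      calc ∑ j, ∑ i, (starRingEnd ℂ) ((b : Matrix ι ι ℂ) i j) * (b : Matrix ι ι ℂ) i j
          = ((b : Matrix ι ι ℂ)ᴴ * (b : Matrix ι ι ℂ)).trace := by
            rw [Matrix.trace]
            refine Finset.sum_congr rfl fun j _ => ?_
            simp [Matrix.mul_apply, Matrix.conjTranspose_apply]
        _ = 0 := hS.symm
    have h3 := sum_conj_self_eq_zero h2
    have : (b : Matrix ι ι ℂ) = 0 := Matrix.ext fun i j => h3 (j, i)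
    exact Subtype.ext this
  have hφinj : Function.Injective φ := by
    intro x y hxy
    have h0 : φ (x - y) = 0 := by rw [map_sub, hxy, sub_self]
    have := hφ0 _ h0
    rwa [sub_eq_zero] at this
  -- φ is surjective since dim B = n = dim H
  have hfd : FiniteDimensional ℂ ↥B :=
    FiniteDimensional.of_injective (StarSubalgebra.subtype B).toAlgHom.toLinearMap
      Subtype.coe_injective
  have hφsurj : Function.Surjective φ :=
    (LinearMap.injective_iff_surjective_of_finrank_eq_finrank
      (by rw [hB, finrank_euclideanSpace])).1 hφinj
  -- main claim: every `x ∈ A` has `f` as an eigenvector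
  have main : ∀ x ∈ A, ∀ i, x.mulVec f i = (p * x).trace * f i := by
    intro x hx
    set c : ℂ := (p * x).trace with hc
    set v : EuclideanSpace ℂ ι := WithLp.toLp 2 (fun i => x.mulVec f i - c * f i : ι → ℂ) with hvdef
    have hvi : ∀ i, v i = x.mulVec f i - c * f i := fun i => rfl
    have hxH : xᴴ ∈ A := by
      have := star_mem hx
      simpa [Matrix.star_eq_conjTranspose] using this
    -- orthogonality of v to all b f
    have horth : ∀ b : ↥B, ∑ i, (starRingEnd ℂ) (v i) * ((b : Matrix ι ι ℂ).mulVec f i) = 0 := by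
      intro b
      have hsplit : ∑ i, (starRingEnd ℂ) (v i) * ((b : Matrix ι ι ℂ).mulVec f i)
          = (∑ i, (starRingEnd ℂ) (x.mulVec f i) * ((b : Matrix ι ι ℂ).mulVec f i))
            - (starRingEnd ℂ) c * ∑ i, (starRingEnd ℂ) (f i) * ((b : Matrix ι ι ℂ).mulVec f i) := by
        rw [Finset.mul_sum, ← Finset.sum_sub_distrib]
        refine Finset.sum_congr rfl fun i _ => ?_
        rw [hvi, map_sub, map_mul]
        ring
      -- first sum
      have hX : (∑ i, (starRingEnd ℂ) (x.mulVec f i) * ((b : Matrix ι ι ℂ).mulVec f i))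
          * (Fintype.card ι : ℂ) = (starRingEnd ℂ) c * (b : Matrix ι ι ℂ).trace := by
        have e1 := S_adj_mul f x (b : Matrix ι ι ℂ)
        have e2 := trace_proj1_mul f (xᴴ * (b : Matrix ι ι ℂ))
        have e3 := keyS xᴴ hxH (b : Matrix ι ι ℂ) b.2
        have e4 := trace_proj1_mul_conjTranspose f x
        rw [← hpdef] at e2 e4
        rw [e2, e1, e4] at e3
        rw [hc]
        exact e3
      -- second sum
      have hY : (∑ i, (starRingEnd ℂ) (f i) * ((b : Matrix ι ι ℂ).mulVec f i))
          * (Fintype.card ι : ℂ) = (b : Matrix ι ι ℂ).trace := by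
        have e1 : ∑ i, (starRingEnd ℂ) (f i) * ((b : Matrix ι ι ℂ).mulVec f i)
            = (p * (b : Matrix ι ι ℂ)).trace := by
          rw [hpdef, trace_proj1_mul]
          refine Finset.sum_congr rfl fun j _ => ?_
          rw [Matrix.mulVec, dotProduct, Finset.mul_sum]
          exact Finset.sum_congr rfl fun k _ => by ring
        rw [e1]
        exact Sb _ b.2
      rw [hsplit]
      have hz : ((∑ i, (starRingEnd ℂ) (x.mulVec f i) * ((b : Matrix ι ι ℂ).mulVec f i))
          - (starRingEnd ℂ) c * ∑ i, (starRingEnd ℂ) (f i) * ((b : Matrix ι ι ℂ).mulVec f i))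
          * (Fintype.card ι : ℂ) = 0 := by
        linear_combination hX - (starRingEnd ℂ) c * hY
      exact (mul_eq_zero.mp hz).resolve_right hn
    -- v is orthogonal to everything, hence zero
    obtain ⟨b0, hb0⟩ := hφsurj v
    have hvv : ∑ i, (starRingEnd ℂ) (v i) * v i = 0 := by
      have := horth b0
      calc ∑ i, (starRingEnd ℂ) (v i) * v i
          = ∑ i, (starRingEnd ℂ) (v i) * ((b0 : Matrix ι ι ℂ).mulVec f i) := by
            refine Finset.sum_congr rfl fun i _ => ?_
            rw [← hφ b0 i, hb0]
        _ = 0 := this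
    have h0 := sum_conj_self_eq_zero hvv
    intro i
    have := h0 i
    rw [hvi] at this
    exact sub_eq_zero.mp this
  -- conclusion
  intro a ha
  have hxH : aᴴ ∈ A := by
    have := star_mem ha
    simpa [Matrix.star_eq_conjTranspose] using this
  have h1 := main a ha
  have h2 := main aᴴ hxH
  have hadj := trace_proj1_mul_conjTranspose f a
  rw [← hpdef] at hadj
  rw [hpdef]
  ext i j
  rw [Matrix.mul_apply, Matrix.mul_apply]
  have hL : ∑ k, a i k * proj1 f k j = a.mulVec f i * (starRingEnd ℂ) (f j) := by
    rw [Matrix.mulVec, dotProduct, Finset.sum_mul]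
    exact Finset.sum_congr rfl fun k _ => by unfold proj1; ring
  have hR : ∑ k, proj1 f i k * a k j
      = f i * (starRingEnd ℂ) (aᴴ.mulVec f j) := by
    rw [Matrix.mulVec, dotProduct, map_sum, Finset.mul_sum]
    refine Finset.sum_congr rfl fun k _ => ?_
    unfold proj1
    simp only [Matrix.conjTranspose_apply, map_mul, Complex.conj_conj, starRingEnd_apply,
      star_star]
    ring
  rw [hL, hR, h1 i, h2 j, map_mul, hadj, Complex.conj_conj]
  ring

end MU
end
end
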